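/- Let t ≥ 4 and construct H_t as follows: take four vertices S = {u_1,u_2,u_3,u_4} together with disjoint cliques K_4, K_8, …, K_{2^{t+1}} (sizes 4·2^{j} for j = 0,…,t−1); each u_i is adjacent to exactly one quarter of the vertices of each clique, and no two u_i share a common neighbor. Then γ_f(H_t) = γ(H_t) = 4. -/

import Mathlib

open Finset

namespace SG

variable {V : Type*}

/-- Closed neighborhood of a vertex as a `Finset`. -/
def closedNbhd [Fintype V] [DecidableEq V] (G : SimpleGraph V) [DecidableRel G.Adj]
    (v : V) : Finset V :=
  insert v (G.neighborFinset v)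

/-- A fractional domination: weights in `[0,1]` with each closed neighborhood of weight `≥ 1`. -/
def IsFracDom [Fintype V] [DecidableEq V] (G : SimpleGraph V) [DecidableRel G.Adj]
    (f : V → ℝ) : Prop :=
  (∀ v, 0 ≤ f v ∧ f v ≤ 1) ∧ ∀ v, 1 ≤ ∑ u ∈ closedNbhd G v, f u

/-- The fractional domination number. -/
noncomputable def fracDomNumber [Fintype V] [DecidableEq V] (G : SimpleGraph V)
    [DecidableRel G.Adj] : ℝ :=
  sInf {x | ∃ f, IsFracDom G f ∧ x = ∑ v, f v}

/-- A dominating set: every vertex not in `S` is adjacent to some vertex of `S`. -/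
def IsDomSet (G : SimpleGraph V) (S : Finset V) : Prop :=
  ∀ v, v ∉ S → ∃ u ∈ S, G.Adj u v

/-- The domination number. -/
noncomputable def domNumber [Fintype V] (G : SimpleGraph V) : ℕ :=
  sInf {k | ∃ S : Finset V, S.card = k ∧ IsDomSet G S}


/-- for the graph `H_t` (four special vertices `S` plus `t`
disjoint cliques of sizes `4·2^j`, each vertex of `S` adjacent to exactly a
quarter of each clique, vertices of `S` having pairwise disjoint
neighborhoods), we have `γ_f(H_t) = γ(H_t) = 4`. -/
theorem Ht_dom_and_fracDom {V : Type*} [Fintype V] [DecidableEq V]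
    (H : SimpleGraph V) [DecidableRel H.Adj]
    (t : ℕ) (ht : 4 ≤ t) (S : Finset V) (C : Fin t → Finset V)
    (hS : S.card = 4)
    (hC : ∀ j, (C j).card = 4 * 2 ^ (j : ℕ))
    (hcover : S ∪ Finset.univ.biUnion C = Finset.univ)
    (hdSC : ∀ j, Disjoint S (C j))
    (hdCC : ∀ j k, j ≠ k → Disjoint (C j) (C k))
    (hclique : ∀ j, ∀ x ∈ C j, ∀ y ∈ C j, x ≠ y → H.Adj x y)
    (hCCedge : ∀ j k, j ≠ k → ∀ x ∈ C j, ∀ y ∈ C k, ¬ H.Adj x y)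
    (hSindep : ∀ x ∈ S, ∀ y ∈ S, ¬ H.Adj x y)
    (hquarter : ∀ u ∈ S, ∀ j, ((C j).filter fun w => H.Adj u w).card = 2 ^ (j : ℕ))
    (hdisjN : ∀ u ∈ S, ∀ v ∈ S, u ≠ v → ∀ w, ¬ (H.Adj u w ∧ H.Adj v w)) :
    fracDomNumber H = 4 ∧ domNumber H = 4 := by
  classical
  -- closed neighborhoods of distinct vertices of S are disjoint
  have hNdisj : ∀ u ∈ S, ∀ v ∈ S, u ≠ v →
      Disjoint (closedNbhd H u) (closedNbhd H v) := by
    intro u hu v hv huv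
    rw [Finset.disjoint_left]
    intro w hwu hwv
    simp only [closedNbhd, Finset.mem_insert, SimpleGraph.mem_neighborFinset] at hwu hwv
    rcases hwu with rfl | h1 <;> rcases hwv with h | h2
    · exact huv h
    · exact hSindep w hu v hv h2.symm
    · exact hSindep u hu v hv (h ▸ h1)
    · exact hdisjN u hu v hv huv w ⟨h1, h2⟩
  -- every vertex is dominated by S (closed domination)
  have hdom : ∀ v : V, ∃ u ∈ S, u = v ∨ H.Adj u v := by
    intro v
    by_cases hv : v ∈ S
    · exact ⟨v, hv, Or.inl rfl⟩
    · have hv' : v ∈ Finset.univ.biUnion C := by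
        have h := Finset.mem_univ v
        rw [← hcover, Finset.mem_union] at h
        tauto
      obtain ⟨j, -, hvj⟩ := Finset.mem_biUnion.mp hv'
      have hsub : S.biUnion (fun u => (C j).filter fun w => H.Adj u w) = C j := by
        apply Finset.eq_of_subset_of_card_le
        · intro x hx
          obtain ⟨u, -, hx⟩ := Finset.mem_biUnion.mp hx
          exact (Finset.mem_filter.mp hx).1
        · rw [Finset.card_biUnion]
          · rw [Finset.sum_congr rfl (fun u hu => hquarter u hu j), Finset.sum_const, hS,
              hC j, smul_eq_mul]
          · intro u hu v hv huv
            rw [Function.onFun, Finset.disjoint_left]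
            intro w hw1 hw2
            exact hdisjN u hu v hv huv w
              ⟨(Finset.mem_filter.mp hw1).2, (Finset.mem_filter.mp hw2).2⟩
      rw [← hsub] at hvj
      obtain ⟨u, hu, hv2⟩ := Finset.mem_biUnion.mp hvj
      exact ⟨u, hu, Or.inr (Finset.mem_filter.mp hv2).2⟩
  have hdomN : ∀ v : V, ∃ u ∈ S, u ∈ closedNbhd H v := by
    intro v
    obtain ⟨u, hu, h⟩ := hdom v
    refine ⟨u, hu, ?_⟩
    simp only [closedNbhd, Finset.mem_insert, SimpleGraph.mem_neighborFinset]
    rcases h with rfl | h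
    · exact Or.inl rfl
    · exact Or.inr h.symm
  -- the indicator of S is a fractional dominating function of weight 4
  set f0 : V → ℝ := fun v => if v ∈ S then 1 else 0 with hf0
  have hf0dom : IsFracDom H f0 := by
    constructor
    · intro v; by_cases h : v ∈ S <;> simp [hf0, h]
    · intro v
      obtain ⟨u, hu, hmem⟩ := hdomN v
      have : f0 u ≤ ∑ w ∈ closedNbhd H v, f0 w := by
        apply Finset.single_le_sum (fun i _ => ?_) hmem
        by_cases h : i ∈ S <;> simp [hf0, h]
      simpa [hf0, hu] using this
  have hf0sum : ∑ v, f0 v = 4 := by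
    rw [hf0]
    rw [Finset.sum_ite_mem, Finset.univ_inter, Finset.sum_const, hS]
    norm_num
  have hmemf : (4:ℝ) ∈ {x | ∃ f, IsFracDom H f ∧ x = ∑ v, f v} :=
    ⟨f0, hf0dom, hf0sum.symm⟩
  -- lower bound for fractional dominating functions
  have hlbf : ∀ x ∈ {x | ∃ f, IsFracDom H f ∧ x = ∑ v, f v}, (4:ℝ) ≤ x := by
    rintro x ⟨f, ⟨hf01, hfN⟩, rfl⟩
    have hpair : (S : Set V).Pairwise (Function.onFun Disjoint (closedNbhd H)) :=
      fun u hu v hv huv => hNdisj u hu v hv huv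
    have h1 : ∑ u ∈ S, ∑ w ∈ closedNbhd H u, f w ≤ ∑ v, f v := by
      rw [← Finset.sum_biUnion hpair]
      exact Finset.sum_le_sum_of_subset_of_nonneg (Finset.subset_univ _)
        (fun i _ _ => (hf01 i).1)
    calc (4:ℝ) = ∑ _u ∈ S, (1:ℝ) := by rw [Finset.sum_const, hS]; norm_num
      _ ≤ ∑ u ∈ S, ∑ w ∈ closedNbhd H u, f w := Finset.sum_le_sum fun u _ => hfN u
      _ ≤ ∑ v, f v := h1
  have hfrac : fracDomNumber H = 4 :=
    le_antisymm (csInf_le ⟨4, hlbf⟩ hmemf) (le_csInf ⟨4, hmemf⟩ hlbf)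
  -- domination number
  have hmemd : 4 ∈ {k | ∃ S : Finset V, S.card = k ∧ IsDomSet H S} := by
    refine ⟨S, hS, fun v hv => ?_⟩
    obtain ⟨u, hu, h⟩ := hdom v
    rcases h with rfl | h
    · exact absurd hu hv
    · exact ⟨u, hu, h⟩
  have hlbd : ∀ k ∈ {k | ∃ S : Finset V, S.card = k ∧ IsDomSet H S}, 4 ≤ k := by
    rintro k ⟨D, hDcard, hDdom⟩
    have hpick : ∀ u ∈ S, ∃ d ∈ D, d ∈ closedNbhd H u := by
      intro u hu
      by_cases hu' : u ∈ D
      · exact ⟨u, hu', Finset.mem_insert_self _ _⟩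
      · obtain ⟨d, hd, hadj⟩ := hDdom u hu'
        exact ⟨d, hd, by
          simp only [closedNbhd, Finset.mem_insert, SimpleGraph.mem_neighborFinset]
          exact Or.inr hadj.symm⟩
    rw [← hS, ← hDcard]
    apply Finset.card_le_card_of_injOn
      (fun u => if h : u ∈ S then (hpick u h).choose else u)
    · intro u hu
      simp only [dif_pos (Finset.mem_coe.mp hu)]
      exact (hpick u hu).choose_spec.1
    · intro u hu v hv heq
      simp only [Finset.mem_coe] at hu hv
      simp only [dif_pos hu, dif_pos hv] at heq
      by_contra hne
      have h1 := (hpick u hu).choose_spec.2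
      have h2 := (hpick v hv).choose_spec.2
      rw [heq] at h1
      exact (Finset.disjoint_left.mp (hNdisj u hu v hv hne) h1) h2
  have hdnum : domNumber H = 4 :=
    le_antisymm (Nat.sInf_le hmemd) (le_csInf ⟨4, hmemd⟩ hlbd)
  exact ⟨hfrac, hdnum⟩


end SG
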